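/- Let M, Q, J be real n×n matrices where M is symmetric positive definite, Q is symmetric, M and Q commute, and J is skew-symmetric. Let X : ℝ → ℝⁿ be differentiable with M X'(t) = J Q X(t) for all t (the conservative flux case τ = ξ = 0 with zero boundary input). Then the discrete Hamiltonian Ĥ(t) = ½ X(t)ᵀ Q M X(t) is constant in t: the structure-preserving DG discretization with conservative (unstabilized) numerical fluxes exactly conserves the discrete energy. -/

import Mathlib

open Matrix

private lemma skew_dot {n : ℕ} (J : Matrix (Fin n) (Fin n) ℝ) (hJ : Jᵀ = -J)
    (v : Fin n → ℝ) : v ⬝ᵥ J.mulVec v = 0 := by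
  have h := Matrix.dotProduct_mulVec v J v
  have h2 : J.vecMul v = (-J).mulVec v := by rw [← hJ, Matrix.mulVec_transpose]
  have h3 : v ⬝ᵥ J.mulVec v = ((-J).mulVec v) ⬝ᵥ v := by rw [h, h2]
  rw [Matrix.neg_mulVec, neg_dotProduct, dotProduct_comm] at h3
  have h4 : v ⬝ᵥ J.mulVec v = J.mulVec v ⬝ᵥ v := dotProduct_comm _ _
  linarith

private lemma hasDerivAt_quad {n : ℕ} (A : Matrix (Fin n) (Fin n) ℝ)
    (X : ℝ → Fin n → ℝ) (hX : Differentiable ℝ X) (t : ℝ) :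
    HasDerivAt (fun t => X t ⬝ᵥ A.mulVec (X t))
      (deriv X t ⬝ᵥ A.mulVec (X t) + X t ⬝ᵥ A.mulVec (deriv X t)) t := by
  have hcomp : ∀ i, HasDerivAt (fun t => X t i) (deriv X t i) t :=
    hasDerivAt_pi.mp (hX t).hasDerivAt
  have : ∀ t, X t ⬝ᵥ A.mulVec (X t) = ∑ i, ∑ j, X t i * (A i j * X t j) := by
    intro t
    simp [dotProduct, Matrix.mulVec, Finset.mul_sum]
  simp only [this]
  have hsum : HasDerivAt (fun t => ∑ i, ∑ j, X t i * (A i j * X t j))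
      (∑ i, ∑ j, (deriv X t i * (A i j * X t j) + X t i * (A i j * deriv X t j))) t := by
    apply HasDerivAt.fun_sum
    intro i _
    apply HasDerivAt.fun_sum
    intro j _
    exact (hcomp i).mul ((hcomp j).const_mul (A i j))
  convert hsum using 1
  simp only [Finset.sum_add_distrib]
  congr 1 <;> simp [dotProduct, Matrix.mulVec, Finset.mul_sum]

/-- **Exact discrete energy conservation for conservative numerical fluxes.**
With `M = Mᵀ > 0`, `Q = Qᵀ` commuting with `M`, `J = -Jᵀ`, and differentiable
state `X` satisfying `M X' = J Q X` (conservative flux `τ = ξ = 0`, zero input),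
the discrete Hamiltonian `Ĥ = ½ Xᵀ Q M X` is constant in time. -/
theorem discrete_pH_energy_conservation
    {n : ℕ} (M Q J : Matrix (Fin n) (Fin n) ℝ)
    (hM : M.PosDef) (hQ : Q.IsSymm) (hMQ : M * Q = Q * M) (hJ : Jᵀ = -J)
    (X : ℝ → Fin n → ℝ) (hX : Differentiable ℝ X)
    (hode : ∀ t, M.mulVec (deriv X t) = J.mulVec (Q.mulVec (X t))) :
    ∀ s t : ℝ, (1/2) * (X s ⬝ᵥ (Q * M).mulVec (X s))
      = (1/2) * (X t ⬝ᵥ (Q * M).mulVec (X t)) := by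
  have hMsym : Mᵀ = M := by
    rw [← Matrix.conjTranspose_eq_transpose_of_trivial]; exact hM.1
  have hQMsymm : (Q * M)ᵀ = Q * M := by
    rw [Matrix.transpose_mul, hQ, hMsym, hMQ]
  -- derivative of the quadratic form
  have hkey : ∀ t, deriv X t ⬝ᵥ (Q * M).mulVec (X t) = 0 := by
    intro t
    have h1 : deriv X t ⬝ᵥ (Q * M).mulVec (X t)
        = deriv X t ⬝ᵥ (M * Q).mulVec (X t) := by rw [hMQ]
    rw [h1, ← Matrix.mulVec_mulVec, Matrix.dotProduct_mulVec,
      ← Matrix.mulVec_transpose, hMsym, hode t]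
    rw [dotProduct_comm]
    exact skew_dot J hJ (Q.mulVec (X t))
  have hkey2 : ∀ t, X t ⬝ᵥ (Q * M).mulVec (deriv X t) = 0 := by
    intro t
    rw [Matrix.dotProduct_mulVec, ← Matrix.mulVec_transpose, hQMsymm,
      dotProduct_comm]
    exact hkey t
  have hderiv : ∀ t, HasDerivAt (fun t => X t ⬝ᵥ (Q * M).mulVec (X t)) 0 t := by
    intro t
    have := hasDerivAt_quad (Q * M) X hX t
    rwa [hkey t, hkey2 t, add_zero] at this
  have hconst : ∀ s t : ℝ,
      X s ⬝ᵥ (Q * M).mulVec (X s) = X t ⬝ᵥ (Q * M).mulVec (X t) := by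
    intro s t
    apply is_const_of_deriv_eq_zero (fun u => (hderiv u).differentiableAt)
    intro u
    exact (hderiv u).deriv
  intro s t
  rw [hconst s t]
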